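/- Let A be a C*-algebra and S a closed densely defined operator on the Hilbert A-module A (with domain a right ideal) such that for every irreducible representation π the fiber S_π is defined. Define S̃ by D(S̃) = {a ∈ A : π(a) ∈ D(cl(S_π)) for all π, and there exists b ∈ A with π(b) = cl(S_π)(π(a)) for all π}, S̃a = b. Then S̃ is a closed operator extending S. -/
import Mathlib


section

variable {A : Type*} [NonUnitalCStarAlgebra A]
variable {ι : Type*} {H : ι → Type*}
variable [∀ i, NormedAddCommGroup (H i)] [∀ i, InnerProductSpace ℂ (H i)]
variable [∀ i, CompleteSpace (H i)]

/-- The closure of the graph of the fiber operator `S_π` of an operator `S` with domain `D`,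
in `π(A) × π(A) ⊆ B(H_π) × B(H_π)`; membership `(π a, π b) ∈ fiberGraphClosure` expresses
`π a ∈ D(cl(S_π))` with `cl(S_π)(π a) = π b`. -/
def fiberGraphClosure (D : Submodule ℂ A) (S : D →ₗ[ℂ] A)
    (π : ∀ i, A →⋆ₙₐ[ℂ] (H i →L[ℂ] H i)) (i : ι) :
    Set ((H i →L[ℂ] H i) × (H i →L[ℂ] H i)) :=
  closure {q | ∃ a : D, q = (π i (a : A), π i (S a))}

/-- The graph of the operator `S̃`:  `(a, b) ∈ tildeGraph` iff for every `i`,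
`π i a ∈ D(cl(S_{π i}))` and `cl(S_{π i})(π i a) = π i b`. -/
def tildeGraph (D : Submodule ℂ A) (S : D →ₗ[ℂ] A)
    (π : ∀ i, A →⋆ₙₐ[ℂ] (H i →L[ℂ] H i)) : Set (A × A) :=
  {p | ∀ i, (π i p.1, π i p.2) ∈ fiberGraphClosure D S π i}

/-- Let `S` be a closed densely defined `A`-linear operator on a C*-algebra `A`
whose domain is a right ideal, and let `(π i)` be the irreducible representations of `A`
(a separating family).  Assume each fiber `S_{π i}` is closable.  Then the prescription
`D(S̃) = {a : π a ∈ D(cl(S_π)) ∀π, ∃ b, π b = cl(S_π)(π a) ∀π}`, `S̃ a = b`, defines a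
(single-valued) closed operator extending `S`. -/
theorem stmt_15
    (π : ∀ i, A →⋆ₙₐ[ℂ] (H i →L[ℂ] H i))
    (hirr : ∀ i, ∀ ξ : H i, ξ ≠ 0 → Dense (Set.range fun a : A => π i a ξ))
    (hsep : ∀ a : A, (∀ i, π i a = 0) → a = 0)
    (D : Submodule ℂ A) (hD : Dense (D : Set A))
    (hIdeal : ∀ a ∈ D, ∀ x : A, a * x ∈ D)
    (S : D →ₗ[ℂ] A)
    (hSmod : ∀ (a : D) (x : A), S ⟨(a : A) * x, hIdeal a a.2 x⟩ = S a * x)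
    (hclosed : IsClosed {p : A × A | ∃ a : D, p = ((a : A), S a)})
    (hfib : ∀ i, ∀ y : H i →L[ℂ] H i, (0, y) ∈ fiberGraphClosure D S π i → y = 0) :
    (∀ a b b' : A, (a, b) ∈ tildeGraph D S π → (a, b') ∈ tildeGraph D S π → b = b') ∧
    IsClosed (tildeGraph D S π) ∧
    (∀ a : D, ((a : A), S a) ∈ tildeGraph D S π) := by

  have hcont : ∀ i, Continuous (π i) := fun i =>
    AddMonoidHomClass.continuous_of_bound (π i) 1
      (fun a => by simpa using NonUnitalStarAlgHom.norm_apply_le (π i) a)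
  -- the fiber graph closure is (the carrier of) a closed submodule
  have hsub : ∀ i, ∀ p q : (H i →L[ℂ] H i) × (H i →L[ℂ] H i),
      p ∈ fiberGraphClosure D S π i → q ∈ fiberGraphClosure D S π i →
      p - q ∈ fiberGraphClosure D S π i := by
    intro i p q hp hq
    let f : D →ₗ[ℂ] ((H i →L[ℂ] H i) × (H i →L[ℂ] H i)) :=
      LinearMap.prod (((π i : A →ₗ[ℂ] (H i →L[ℂ] H i))).comp D.subtype)
        ((π i : A →ₗ[ℂ] (H i →L[ℂ] H i)).comp S)
    have hset : {q | ∃ a : D, q = (π i (a : A), π i (S a))} = Set.range f := by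
      ext x; constructor
      · rintro ⟨a, rfl⟩; exact ⟨a, rfl⟩
      · rintro ⟨a, rfl⟩; exact ⟨a, rfl⟩
    have hcl : fiberGraphClosure D S π i = (LinearMap.range f).topologicalClosure := by
      unfold fiberGraphClosure
      rw [hset, ← LinearMap.coe_range, Submodule.topologicalClosure_coe]
    rw [hcl] at hp hq ⊢
    exact sub_mem hp hq
  refine ⟨?_, ?_, ?_⟩
  · intro a b b' hb hb'
    have h0 : ∀ i, π i (b - b') = 0 := by
      intro i
      have := hsub i _ _ (hb i) (hb' i)
      simp only [Prod.mk_sub_mk, sub_self] at this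
      have := hfib i (π i b - π i b') this
      rw [map_sub]
      exact this
    exact sub_eq_zero.mp (hsep (b - b') h0)
  · have : tildeGraph D S π =
        ⋂ i, (fun p : A × A => (π i p.1, π i p.2)) ⁻¹' fiberGraphClosure D S π i := by
      ext p; simp [tildeGraph, Set.mem_iInter]
    rw [this]
    exact isClosed_iInter fun i =>
      (isClosed_closure.preimage (((hcont i).comp continuous_fst).prodMk
        ((hcont i).comp continuous_snd)))
  · intro a i
    exact subset_closure ⟨a, rfl⟩


end
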